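/- Let y be an integer with 0 ≤ y ≤ n, let v ∈ [0,1], and let α ∈ (0,1). If θ_u, θ_ℓ ∈ (0,1) satisfy (1−v) F_{θ_u}(y−1) + v F_{θ_u}(y) = α/2 and (1−v)(1 − F_{θ_ℓ}(y−1)) + v (1 − F_{θ_ℓ}(y)) = α/2, then θ_ℓ < θ_u. (The randomized confidence interval [ℓ_R(y,v), u_R(y,v)] is a nondegenerate interval.) -/

import Mathlib

/-- The Binomial(n, θ) probability mass function `f_θ(y) = C(n,y) θ^y (1-θ)^(n-y)`. -/
noncomputable def binomP (n : ℕ) (θ : ℝ) (y : ℕ) : ℝ :=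
  (n.choose y : ℝ) * θ ^ y * (1 - θ) ^ (n - y)

/-- `F_θ(y-1) = ∑_{j=0}^{y-1} f_θ(j)`, with the convention `F_θ(-1) = 0`. -/
noncomputable def binomCDFpred (n : ℕ) (θ : ℝ) (y : ℕ) : ℝ :=
  ∑ j ∈ Finset.range y, binomP n θ j

/-- The Binomial(n, θ) cumulative distribution function `F_θ(y) = ∑_{j=0}^{y} f_θ(j)`. -/
noncomputable def binomCDF (n : ℕ) (θ : ℝ) (y : ℕ) : ℝ :=
  ∑ j ∈ Finset.range (y + 1), binomP n θ j

lemma binomP_nonneg (n : ℕ) {θ : ℝ} (h0 : 0 ≤ θ) (h1 : θ ≤ 1) (j : ℕ) :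
    0 ≤ binomP n θ j := by
  unfold binomP
  have h : (0:ℝ) ≤ 1 - θ := by linarith
  positivity

lemma hasDerivAt_binomP (n j : ℕ) (hj : j ≤ n) (θ : ℝ) :
    HasDerivAt (fun t => binomP n t j)
      ((n:ℝ) * ((if j = 0 then 0 else binomP (n-1) θ (j-1)) - binomP (n-1) θ j)) θ := by
  have h2 : HasDerivAt (fun t : ℝ => (1 - t) ^ (n - j))
      (((n-j : ℕ) : ℝ) * (1-θ)^(n-j-1) * (-1)) θ :=
    ((hasDerivAt_id θ).const_sub 1).pow _
  have h := ((hasDerivAt_pow j θ).mul h2).const_mul ((n.choose j : ℝ))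
  have heq : (fun t : ℝ => (n.choose j : ℝ) * (t ^ j * (1 - t) ^ (n - j)))
      = fun t => binomP n t j := by
    funext t; simp [binomP, mul_assoc]
  replace h : HasDerivAt (fun t : ℝ => (n.choose j : ℝ) * (t ^ j * (1 - t) ^ (n - j))) _ θ := h
  rw [heq] at h
  convert h using 1
  rcases Nat.eq_zero_or_pos j with hj0 | hj0
  · subst hj0
    simp [binomP]
  · obtain ⟨i, rfl⟩ : ∃ i, j = i + 1 := ⟨j - 1, by omega⟩
    have hn1 : i + 1 ≤ n := hj
    have e1 : n - 1 - i = n - (i+1) := by omega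
    have e2 : n - 1 - (i+1) = n - (i+1) - 1 := by omega
    have hkey1 : (n : ℝ) * ((n-1).choose i) = (n.choose (i+1) : ℝ) * (i+1) := by
      have h := Nat.add_one_mul_choose_eq (n-1) i
      have hn : n - 1 + 1 = n := by omega
      rw [hn] at h
      exact_mod_cast congrArg (Nat.cast : ℕ → ℝ) h
    have hkey2 : (n : ℝ) * ((n-1).choose (i+1)) = (n.choose (i+1) : ℝ) * ((n:ℝ) - (i+1)) := by
      have h1 := Nat.add_one_mul_choose_eq (n-1) (i+1)
      have h2 := Nat.choose_succ_right_eq n (i+1)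
      have hn : n - 1 + 1 = n := by omega
      rw [hn] at h1
      -- h1 : n * (n-1).choose (i+1) = n.choose (i+2) * (i+2)
      -- h2 : n.choose (i+2) * (i+2) = n.choose (i+1) * (n - (i+1))
      have h3 : n * (n-1).choose (i+1) = n.choose (i+1) * (n - (i+1)) := by
        rw [h1]; exact h2
      have := congrArg (Nat.cast : ℕ → ℝ) h3
      push_cast [Nat.cast_sub hn1] at this
      exact this
    simp only [binomP, if_neg (Nat.succ_ne_zero i), Nat.add_sub_cancel, e1, e2]
    push_cast [Nat.cast_sub hn1]
    linear_combination (θ^i * (1-θ)^(n-(i+1))) * hkey1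
      - (θ^(i+1) * (1-θ)^(n-(i+1)-1)) * hkey2

lemma hasDerivAt_binomSum (n k : ℕ) (hk : k ≤ n + 1) (θ : ℝ) :
    HasDerivAt (fun t => ∑ j ∈ Finset.range k, binomP n t j)
      (-((n:ℝ) * (if k = 0 then 0 else binomP (n-1) θ (k-1)))) θ := by
  set g : ℕ → ℝ := fun j => if j = 0 then 0 else binomP (n-1) θ (j-1) with hg
  have h : HasDerivAt (fun t => ∑ j ∈ Finset.range k, binomP n t j)
      (∑ j ∈ Finset.range k, (n:ℝ) * (g j - g (j+1))) θ := by
    apply HasDerivAt.fun_sum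
    intro j hj
    have hjn : j ≤ n := by
      have := Finset.mem_range.mp hj; omega
    simpa [hg] using hasDerivAt_binomP n j hjn θ
  convert h using 1
  have : ∑ j ∈ Finset.range k, (n:ℝ) * (g j - g (j+1))
      = (n:ℝ) * ∑ j ∈ Finset.range k, (g j - g (j+1)) := by
    rw [Finset.mul_sum]
  rw [this, Finset.sum_range_sub' g]
  by_cases hk0 : k = 0
  · simp [hg, hk0]
  · simp only [hg, hk0, if_neg hk0]
    simp only [↓reduceIte]
    ring

lemma binomSum_antitoneOn (n k : ℕ) (hk : k ≤ n + 1) :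
    AntitoneOn (fun t => ∑ j ∈ Finset.range k, binomP n t j) (Set.Icc (0:ℝ) 1) := by
  apply antitoneOn_of_deriv_nonpos (convex_Icc 0 1)
  · exact fun x _ => (hasDerivAt_binomSum n k hk x).continuousAt.continuousWithinAt
  · intro x hx
    rw [interior_Icc] at hx
    exact (hasDerivAt_binomSum n k hk x).differentiableAt.differentiableWithinAt
  · intro x hx
    rw [interior_Icc] at hx
    rw [(hasDerivAt_binomSum n k hk x).deriv]
    have h0 : (0:ℝ) ≤ x := le_of_lt hx.1
    have h1 : x ≤ 1 := le_of_lt hx.2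
    have hnn : 0 ≤ (if k = 0 then 0 else binomP (n-1) x (k-1)) := by
      split
      · exact le_refl 0
      · exact binomP_nonneg _ h0 h1 _
    have : (0:ℝ) ≤ (n:ℝ) := Nat.cast_nonneg n
    nlinarith


/-- For `0 ≤ y ≤ n`, `v ∈ [0,1]`, `α ∈ (0,1)`: if `θ_u, θ_ℓ ∈ (0,1)` satisfy
`(1-v) F_{θ_u}(y-1) + v F_{θ_u}(y) = α/2` and
`(1-v)(1 - F_{θ_ℓ}(y-1)) + v(1 - F_{θ_ℓ}(y)) = α/2`, then `θ_ℓ < θ_u`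
(the randomized confidence interval `[ℓ_R(y,v), u_R(y,v)]` is nondegenerate). -/
theorem stmt_12 (n : ℕ) (hn : 1 ≤ n) (y : ℕ) (hy : y ≤ n)
    (v : ℝ) (hv : v ∈ Set.Icc (0 : ℝ) 1) (α : ℝ) (hα : α ∈ Set.Ioo (0 : ℝ) 1)
    (θu θl : ℝ) (hθu : θu ∈ Set.Ioo (0 : ℝ) 1) (hθl : θl ∈ Set.Ioo (0 : ℝ) 1)
    (hu : (1 - v) * binomCDFpred n θu y + v * binomCDF n θu y = α / 2)
    (hl : (1 - v) * (1 - binomCDFpred n θl y) + v * (1 - binomCDF n θl y) = α / 2) :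
    θl < θu := by
  by_contra hcon
  push_neg at hcon
  have hul : θu ∈ Set.Icc (0:ℝ) 1 := ⟨le_of_lt hθu.1, le_of_lt hθu.2⟩
  have hll : θl ∈ Set.Icc (0:ℝ) 1 := ⟨le_of_lt hθl.1, le_of_lt hθl.2⟩
  have h1 := binomSum_antitoneOn n y (by omega) hul hll hcon
  have h2 := binomSum_antitoneOn n (y+1) (by omega) hul hll hcon
  simp only at h1 h2
  have e1 : binomCDFpred n θl y ≤ binomCDFpred n θu y := h1
  have e2 : binomCDF n θl y ≤ binomCDF n θu y := h2
  have hv0 : 0 ≤ v := hv.1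
  have hv1 : v ≤ 1 := hv.2
  nlinarith [hα.2]
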